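/- Let f(z) = z^2 + c with c ≠ 0. If σ(z) = az + b is a linear (degree-one) polynomial and σ ∘ f^n = f^n ∘ σ for some n ≥ 1, then σ is the identity map. -/

import Mathlib

open Polynomial

noncomputable def QQ (c : ℂ) : ℕ → Polynomial ℂ
  | 0 => Polynomial.X
  | n+1 => QQ c n ^ 2 + Polynomial.C c

lemma QQ_eval (c z : ℂ) (n : ℕ) : (QQ c n).eval z = (fun w : ℂ => w ^ 2 + c)^[n] z := by
  induction n with
  | zero => simp [QQ]
  | succ k ih => simp [QQ, Function.iterate_succ_apply', ih]

lemma coeff_comp_scale (p : Polynomial ℂ) (a : ℂ) (k : ℕ) :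
    (p.comp (C a * X)).coeff k = a ^ k * p.coeff k := by
  induction p using Polynomial.induction_on' with
  | add p q hp hq => simp [add_comp, hp, hq, mul_add]
  | monomial i r =>
      rw [monomial_comp, mul_pow, ← C_pow]
      simp only [coeff_C_mul, coeff_X_pow, coeff_monomial]
      rcases eq_or_ne k i with rfl | hki
      · simp; ring
      · simp [hki, Ne.symm hki]

lemma iter_even (c : ℂ) (n : ℕ) (hn : 1 ≤ n) (z : ℂ) :
    (fun w : ℂ => w ^ 2 + c)^[n] (-z) = (fun w : ℂ => w ^ 2 + c)^[n] z := by
  obtain ⟨m, rfl⟩ : ∃ m, n = m + 1 := ⟨n - 1, by omega⟩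
  rw [Function.iterate_succ_apply, Function.iterate_succ_apply]
  congr 1
  show (-z) ^ 2 + c = z ^ 2 + c
  ring

lemma QQ_struct (c : ℂ) : ∀ n : ℕ, 1 ≤ n → ∃ R : Polynomial ℂ,
    QQ c n = X ^ (2 ^ n) + C (2 ^ (n - 1) * c) * X ^ (2 ^ n - 2) + R ∧
      R.degree < ((2 ^ n - 2 : ℕ) : WithBot ℕ) := by
  intro n hn
  induction n, hn using Nat.le_induction with
  | base =>
      refine ⟨0, ?_, ?_⟩
      · show QQ c 0 ^ 2 + C c = _
        norm_num [QQ]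
      · rw [degree_zero]
        exact bot_lt_iff_ne_bot.mpr (by simp)
  | succ n hn1 ih =>
      obtain ⟨R, hR, hdeg⟩ := ih
      have h2m : 2 ≤ 2 ^ n := by
        calc 2 = 2 ^ 1 := rfl
        _ ≤ 2 ^ n := Nat.pow_le_pow_right (by norm_num) hn1
      obtain ⟨k, hk⟩ : ∃ k, 2 ^ n = k + 2 := ⟨2 ^ n - 2, by omega⟩
      have hsub : 2 ^ n - 2 = k := by omega
      have hsucc : 2 ^ (n + 1) = 2 * k + 4 := by rw [pow_succ]; omega
      have hsub2 : 2 ^ (n + 1) - 2 = 2 * k + 2 := by omega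
      have hc2 : (2 : ℂ) ^ n = 2 * 2 ^ (n - 1) := by
        conv_lhs => rw [show n = (n - 1) + 1 by omega]
        rw [pow_succ]; ring
      refine ⟨C ((2 ^ (n - 1) * c) ^ 2) * X ^ (2 * k) + R ^ 2 + 2 * X ^ (k + 2) * R
          + 2 * (C (2 ^ (n - 1) * c) * X ^ k) * R + C c, ?_, ?_⟩
      · show QQ c n ^ 2 + C c = _
        rw [hR, hsub]
        simp only [Nat.add_sub_cancel]
        rw [hsub2, hsucc, hk, hc2]
        simp only [C_pow, C_mul, map_ofNat]
        ring
      · rw [hsub2]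
        rw [hsub] at hdeg
        have hRle : R.degree ≤ (k : WithBot ℕ) := le_of_lt hdeg
        have step : ∀ p q : Polynomial ℂ, p.degree < ((2 * k + 2 : ℕ) : WithBot ℕ) →
            q.degree < ((2 * k + 2 : ℕ) : WithBot ℕ) →
            (p + q).degree < ((2 * k + 2 : ℕ) : WithBot ℕ) := fun p q hp hq =>
          lt_of_le_of_lt (degree_add_le p q) (max_lt hp hq)
        have hC2 : ((2 : Polynomial ℂ)).degree ≤ 0 := by
          rw [← map_ofNat (C : ℂ →+* Polynomial ℂ) 2]
          exact degree_C_le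
        apply step
        apply step
        apply step
        apply step
        · -- C (t^2) * X^(2k)
          refine lt_of_le_of_lt (degree_C_mul_X_pow_le _ _) ?_
          exact_mod_cast Nat.lt_succ_of_le (by omega)
        · -- R^2
          have : (R ^ 2).degree ≤ ((k : WithBot ℕ) + k) := by
            rw [sq]
            exact le_trans (degree_mul_le R R) (add_le_add hRle hRle)
          refine lt_of_le_of_lt this ?_
          exact_mod_cast (by omega : k + k < 2 * k + 2)
        · -- 2 * X^(k+2) * R
          have h1 : (2 * X ^ (k + 2) * R).degree ≤ ((k + 2 : ℕ) : WithBot ℕ) + R.degree := by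
            refine le_trans (degree_mul_le _ R) (add_le_add ?_ le_rfl)
            refine le_trans (degree_mul_le _ _) ?_
            calc (2 : Polynomial ℂ).degree + (X ^ (k + 2) : Polynomial ℂ).degree
                ≤ 0 + ((k + 2 : ℕ) : WithBot ℕ) := add_le_add hC2 (degree_X_pow_le _)
              _ = ((k + 2 : ℕ) : WithBot ℕ) := zero_add _
          refine lt_of_le_of_lt h1 ?_
          have h2 : ((k + 2 : ℕ) : WithBot ℕ) + R.degree
              < ((k + 2 : ℕ) : WithBot ℕ) + (k : WithBot ℕ) :=
            WithBot.add_lt_add_left (by exact_mod_cast WithBot.coe_ne_bot) hdeg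
          refine lt_of_lt_of_le h2 ?_
          exact_mod_cast le_of_eq (by omega : (k + 2) + k = 2 * k + 2)
        · -- 2 * (C t * X^k) * R
          have h1 : (2 * (C (2 ^ (n - 1) * c) * X ^ k) * R).degree
              ≤ ((k : ℕ) : WithBot ℕ) + (k : WithBot ℕ) := by
            refine le_trans (degree_mul_le _ R) ?_
            refine add_le_add ?_ hRle
            refine le_trans (degree_mul_le _ _) ?_
            calc (2 : Polynomial ℂ).degree + (C (2 ^ (n - 1) * c) * X ^ k).degree
                ≤ 0 + ((k : ℕ) : WithBot ℕ) := add_le_add hC2 (degree_C_mul_X_pow_le _ _)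
              _ = _ := zero_add _
          refine lt_of_le_of_lt h1 ?_
          exact_mod_cast (by omega : k + k < 2 * k + 2)
        · -- C c
          refine lt_of_le_of_lt degree_C_le ?_
          exact_mod_cast (by omega : 0 < 2 * k + 2)

/-- For f(z) = z² + c with c ≠ 0, any linear polynomial σ(z) = az + b commuting
with some iterate of f is the identity. -/
theorem quadratic_trivial_linear_symmetry (c a b : ℂ) (hc : c ≠ 0) (ha : a ≠ 0)
    (n : ℕ) (hn : 1 ≤ n)
    (h : ∀ z : ℂ, a * ((fun w : ℂ => w ^ 2 + c)^[n] z) + b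
        = (fun w : ℂ => w ^ 2 + c)^[n] (a * z + b)) :
    a = 1 ∧ b = 0 := by
  have h2m : 2 ≤ 2 ^ n := by
    calc 2 = 2 ^ 1 := rfl
    _ ≤ 2 ^ n := Nat.pow_le_pow_right (by norm_num) hn
  obtain ⟨R, hR, hdeg⟩ := QQ_struct c n hn
  have hRc : ∀ j, 2 ^ n - 2 ≤ j → R.coeff j = 0 := by
    intro j hj
    exact coeff_eq_zero_of_degree_lt (lt_of_lt_of_le hdeg (by exact_mod_cast hj))
  have c1 : (QQ c n).coeff (2 ^ n) = 1 := by
    rw [hR]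
    simp only [coeff_add, coeff_C_mul, coeff_X_pow]
    rw [hRc _ (by omega), if_neg (by omega : ¬(2 ^ n = 2 ^ n - 2))]
    simp
  have c2 : (QQ c n).coeff (2 ^ n - 2) = 2 ^ (n - 1) * c := by
    rw [hR]
    simp only [coeff_add, coeff_C_mul, coeff_X_pow]
    rw [hRc _ le_rfl, if_neg (by omega : ¬(2 ^ n - 2 = 2 ^ n))]
    simp
  -- b = 0
  have hb : b = 0 := by
    by_contra hb0
    have h2 : ∀ w : ℂ, (fun w : ℂ => w ^ 2 + c)^[n] w
        = a * ((fun w : ℂ => w ^ 2 + c)^[n] ((w - b) / a)) + b := by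
      intro w
      have hz := h ((w - b) / a)
      rw [show a * ((w - b) / a) + b = w by field_simp; ring] at hz
      exact hz.symm
    have h1 : ∀ w : ℂ, (fun w : ℂ => w ^ 2 + c)^[n] (2 * b - w)
        = a * ((fun w : ℂ => w ^ 2 + c)^[n] ((w - b) / a)) + b := by
      intro w
      have hz := h (-((w - b) / a))
      rw [show a * (-((w - b) / a)) + b = 2 * b - w by field_simp; ring,
        iter_even c n hn] at hz
      exact hz.symm
    have hper : ∀ w : ℂ, (fun w : ℂ => w ^ 2 + c)^[n] w
        = (fun w : ℂ => w ^ 2 + c)^[n] (w - 2 * b) := by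
      intro w
      rw [h2 w, ← h1 w, show w - 2 * b = -(2 * b - w) by ring, iter_even c n hn]
    have h3 : ∀ kk : ℕ, (fun w : ℂ => w ^ 2 + c)^[n] (2 * b * kk)
        = (fun w : ℂ => w ^ 2 + c)^[n] 0 := by
      intro kk
      induction kk with
      | zero => norm_num
      | succ j ihj =>
          rw [hper (2 * b * (j + 1 : ℕ)),
            show 2 * b * ((j + 1 : ℕ) : ℂ) - 2 * b = 2 * b * (j : ℕ) by push_cast; ring, ihj]
    set p : Polynomial ℂ := QQ c n - C ((fun w : ℂ => w ^ 2 + c)^[n] 0) with hp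
    have hroot : ∀ kk : ℕ, p.IsRoot (2 * b * kk) := by
      intro kk
      simp only [hp, IsRoot, eval_sub, eval_C, QQ_eval]
      rw [h3 kk, sub_self]
    have hb2 : (2 * b : ℂ) ≠ 0 := mul_ne_zero two_ne_zero hb0
    have hinf : {x : ℂ | p.IsRoot x}.Infinite := by
      refine Set.infinite_of_injective_forall_mem
        (f := fun kk : ℕ => 2 * b * (kk : ℂ)) ?_ ?_
      · intro i j hij
        simp only at hij
        exact Nat.cast_injective (mul_left_cancel₀ hb2 hij)
      · intro kk
        exact hroot kk
    have hp0 : p = 0 := p.eq_zero_of_infinite_isRoot hinf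
    have hcoe : p.coeff (2 ^ n) = 1 := by
      rw [hp, coeff_sub, c1, coeff_C, if_neg (by omega)]
      ring
    rw [hp0] at hcoe
    simp at hcoe
  subst hb
  refine ⟨?_, rfl⟩
  -- polynomial identity
  have hpoly : C a * QQ c n = (QQ c n).comp (C a * X) := by
    apply Polynomial.funext
    intro z
    have hz := h z
    simp only [add_zero] at hz
    simp [eval_comp, QQ_eval, hz]
  have hcoeff : ∀ j, a * (QQ c n).coeff j = a ^ j * (QQ c n).coeff j := by
    intro j
    have := congrArg (fun q : Polynomial ℂ => q.coeff j) hpoly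
    simp only [coeff_C_mul, coeff_comp_scale] at this
    exact this
  have e1 : a = a ^ (2 ^ n) := by
    have := hcoeff (2 ^ n)
    rw [c1] at this
    simpa using this
  have e2 : a = a ^ (2 ^ n - 2) := by
    have := hcoeff (2 ^ n - 2)
    rw [c2] at this
    have ht : (2 : ℂ) ^ (n - 1) * c ≠ 0 := mul_ne_zero (pow_ne_zero _ two_ne_zero) hc
    exact mul_right_cancel₀ ht this
  have ha3 : a ^ 3 = a := by
    calc a ^ 3 = a * a ^ 2 := by ring
    _ = a ^ (2 ^ n - 2) * a ^ 2 := by rw [← e2]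
    _ = a ^ (2 ^ n - 2 + 2) := by rw [pow_add]
    _ = a ^ (2 ^ n) := by congr 1; omega
    _ = a := e1.symm
  have hfac : (a - 1) * (a + 1) * a = 0 := by linear_combination ha3
  rcases mul_eq_zero.1 hfac with hfac | h0
  · rcases mul_eq_zero.1 hfac with h1 | hm1
    · linear_combination h1
    · -- a = -1 : contradiction
      exfalso
      have haneg : a = -1 := by linear_combination hm1
      subst haneg
      have hF0 : ∀ z : ℂ, (fun w : ℂ => w ^ 2 + c)^[n] z = 0 := by
        intro z
        have hz := h z
        rw [show (-1 : ℂ) * z + 0 = -z by ring, iter_even c n hn] at hz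
        have : (2 : ℂ) * ((fun w : ℂ => w ^ 2 + c)^[n] z) = 0 := by linear_combination -hz
        exact (mul_eq_zero.1 this).resolve_left two_ne_zero
      have hcomm : (fun w : ℂ => w ^ 2 + c)^[n] ((0 : ℂ) ^ 2 + c)
          = ((fun w : ℂ => w ^ 2 + c)^[n] 0) ^ 2 + c := by
        have e1' := Function.iterate_succ_apply (fun w : ℂ => w ^ 2 + c) n 0
        have e2' := Function.iterate_succ_apply' (fun w : ℂ => w ^ 2 + c) n 0
        exact (e1'.symm.trans e2' : _)
      rw [hF0, hF0] at hcomm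
      exact hc (by linear_combination -hcomm)
  · exact absurd h0 ha
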